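/- A monotone (0,1)-matrix A of size m×n (with nonincreasing row sums r_1 ≥ ... ≥ r_m and nonincreasing column sums c_1 ≥ ... ≥ c_n) with prescribed row sum tuple r and column sum tuple c exists if and only if r is majorized by the conjugate s of c. -/

import Mathlib

/-- Row sums of a matrix. -/
def rowSum {m n : ℕ} (A : Matrix (Fin m) (Fin n) ℕ) (i : Fin m) : ℕ := ∑ j, A i j

/-- Column sums of a matrix. -/
def colSum {m n : ℕ} (A : Matrix (Fin m) (Fin n) ℕ) (j : Fin n) : ℕ := ∑ i, A i j

/-- A (0,1)-matrix. -/
def ZeroOne {m n : ℕ} (A : Matrix (Fin m) (Fin n) ℕ) : Prop := ∀ i j, A i j ≤ 1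

/-- A matrix is monotone if its row sums and column sums are nonincreasing. -/
def MonotoneMat {m n : ℕ} (A : Matrix (Fin m) (Fin n) ℕ) : Prop :=
  Antitone (rowSum A) ∧ Antitone (colSum A)

/-- The conjugate of the tuple `c`, with respect to bound `m`:
`s i = |{j : c j ≥ i}|` where `i` is read 1-indexed (so `i : Fin m` stands for `i+1`). -/
def conjTuple (m : ℕ) {n : ℕ} (c : Fin n → ℕ) (i : Fin m) : ℕ :=
  (Finset.univ.filter (fun j => (i : ℕ) + 1 ≤ c j)).card

/-- `r` is majorized by `s`: partial sums of `r` are dominated by those of `s`,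
with equal total sums. -/
def MajorizedBy {m : ℕ} (r s : Fin m → ℕ) : Prop :=
  (∀ h : Fin m, ∑ i ∈ Finset.Iic h, r i ≤ ∑ i ∈ Finset.Iic h, s i) ∧
  (∑ i, r i = ∑ i, s i)

/-- The type of a tuple: the number of distinct nonzero values among its components. -/
def tupleType {n : ℕ} (c : Fin n → ℕ) : ℕ :=
  ((Finset.univ.image c).filter (fun x => x ≠ 0)).card

/-! ### Auxiliary machinery for Gale–Ryser -/

lemma grCardFilter {q K : ℕ} (hK : K ≤ q) :
    ((Finset.univ : Finset (Fin q)).filter (fun i : Fin q => (i : ℕ) + 1 ≤ K)).card = K := by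
  have hbij : ((Finset.univ : Finset (Fin q)).filter
      (fun i : Fin q => (i : ℕ) + 1 ≤ K)).card = (Finset.range K).card := by
    apply Finset.card_bij (fun (i : Fin q) _ => (i : ℕ))
    · intro a ha
      simp only [Finset.mem_filter] at ha
      simp only [Finset.mem_range]
      omega
    · intro a _ b _ hab
      exact Fin.val_injective hab
    · intro b hb
      rw [Finset.mem_range] at hb
      exact ⟨⟨b, lt_of_lt_of_le hb hK⟩, by simp only [Finset.mem_filter, Finset.mem_univ, true_and]; omega, rfl⟩
  rw [hbij, Finset.card_range]

lemma grSumExchange {q : ℕ} (A B : Finset (Fin q)) (f g : Fin q → ℕ)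
    (h : ∀ t, t ∉ B → f t = g t) :
    ∑ t ∈ A, f t + ∑ t ∈ A ∩ B, g t = ∑ t ∈ A, g t + ∑ t ∈ A ∩ B, f t := by
  have hf := Finset.sum_inter_add_sum_sdiff A B f
  have hg := Finset.sum_inter_add_sum_sdiff A B g
  have hdiff : ∑ t ∈ A \ B, f t = ∑ t ∈ A \ B, g t :=
    Finset.sum_congr rfl (fun t ht => h t (Finset.mem_sdiff.1 ht).2)
  omega

/-- one transfer step on a tuple: decrease position `i`, increase position `k`. -/
def grUpd {m : ℕ} (s : Fin m → ℕ) (i k : Fin m) : Fin m → ℕ :=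
  fun t => if t = i then s i - 1 else if t = k then s k + 1 else s t

/-- total discrepancy of partial sums. -/
def grMeas {m : ℕ} (r s : Fin m → ℕ) : ℕ :=
  ∑ h : Fin m, (∑ t ∈ Finset.Iic h, s t - ∑ t ∈ Finset.Iic h, r t)

lemma grTransfer {m : ℕ} (r s : Fin m → ℕ) (hr : Antitone r)
    (maj : MajorizedBy r s) (hne : r ≠ s) :
    ∃ i k : Fin m, i ≠ k ∧ s k < s i ∧
      MajorizedBy r (grUpd s i k) ∧ grMeas r (grUpd s i k) < grMeas r s := by
  classical
  set T := Finset.univ.filter (fun t => r t ≠ s t) with hTdef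
  have hT : T.Nonempty := by
    rcases Finset.eq_empty_or_nonempty T with he | hne'
    · exfalso; apply hne; funext t
      by_contra hts
      have ht : t ∈ T := by simp [hTdef, hts]
      simp [he] at ht
    · exact hne'
  set i := T.min' hT with hidef
  have hiT : r i ≠ s i := by
    have := T.min'_mem hT
    simp only [hTdef, Finset.mem_filter] at this
    exact this.2
  have hbefore : ∀ t, t < i → r t = s t := by
    intro t ht
    by_contra hts
    have htT : t ∈ T := by simp [hTdef, hts]
    exact absurd (T.min'_le t htT) (not_le.2 ht)
  have hri : r i < s i := by
    have h1 := maj.1 i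
    have h2 : ∑ t ∈ Finset.Iio i, r t = ∑ t ∈ Finset.Iio i, s t :=
      Finset.sum_congr rfl (fun t ht => hbefore t (Finset.mem_Iio.1 ht))
    rw [← Finset.Iio_insert i, Finset.sum_insert (by simp),
      Finset.sum_insert (by simp)] at h1
    omega
  set K := Finset.univ.filter (fun t => s t < r t) with hKdef
  have hK : K.Nonempty := by
    rcases Finset.eq_empty_or_nonempty K with he | h'
    · exfalso
      have hlt := Finset.sum_lt_sum (f := r) (g := s) (s := Finset.univ)
        (by
          intro t _
          by_contra hts
          have htK : t ∈ K := by simp [hKdef]; omega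
          simp [he] at htK)
        ⟨i, Finset.mem_univ i, hri⟩
      have := maj.2
      omega
    · exact h'
  set k := K.min' hK with hkdef
  have hkK : s k < r k := by
    have := K.min'_mem hK
    simp only [hKdef, Finset.mem_filter] at this
    exact this.2
  have hik : i < k := by
    have hne' : i ≠ k := by intro h; rw [h] at hri; omega
    have hle : i ≤ k := T.min'_le k (by simp [hTdef]; omega)
    exact lt_of_le_of_ne hle hne'
  have hbk : ∀ t, t < k → r t ≤ s t := by
    intro t ht
    by_contra hts
    have htK : t ∈ K := by simp [hKdef]; omega
    exact absurd (K.min'_le t htK) (not_le.2 ht)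
  have hdom : ∀ h : Fin m, i ≤ h → h < k →
      ∑ t ∈ Finset.Iic h, r t < ∑ t ∈ Finset.Iic h, s t := by
    intro h hih hhk
    apply Finset.sum_lt_sum
    · intro t ht
      exact hbk t (lt_of_le_of_lt (Finset.mem_Iic.1 ht) hhk)
    · exact ⟨i, Finset.mem_Iic.2 hih, hri⟩
  have hrki : r k ≤ r i := hr hik.le
  have hski : s k < s i := by omega
  have hsi1 : 1 ≤ s i := by omega
  have hs'i : grUpd s i k i = s i - 1 := by simp [grUpd]
  have hs'k : grUpd s i k k = s k + 1 := by simp [grUpd, hik.ne']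
  have hs'other : ∀ t, t ≠ i → t ≠ k → grUpd s i k t = s t := by
    intro t h1 h2; simp [grUpd, h1, h2]
  -- partial sums of s' compared with s
  have hkey : ∀ h : Fin m,
      (h < i → ∑ t ∈ Finset.Iic h, grUpd s i k t = ∑ t ∈ Finset.Iic h, s t) ∧
      (i ≤ h → h < k → ∑ t ∈ Finset.Iic h, grUpd s i k t + 1 = ∑ t ∈ Finset.Iic h, s t) ∧
      (k ≤ h → ∑ t ∈ Finset.Iic h, grUpd s i k t = ∑ t ∈ Finset.Iic h, s t) := by
    intro h
    have hex := grSumExchange (Finset.Iic h) {i, k} (grUpd s i k) s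
      (fun t ht => by
        simp only [Finset.mem_insert, Finset.mem_singleton, not_or] at ht
        exact hs'other t ht.1 ht.2)
    refine ⟨?_, ?_, ?_⟩
    · intro hhi
      have hinter : Finset.Iic h ∩ {i, k} = ∅ := by
        ext t
        simp only [Finset.mem_inter, Finset.mem_Iic, Finset.mem_insert,
          Finset.mem_singleton, Finset.notMem_empty, iff_false, not_and, not_or]
        intro hth
        constructor
        · rintro rfl; exact absurd hth (not_le.2 hhi)
        · rintro rfl; exact absurd hth (not_le.2 (lt_trans hhi hik))
      rw [hinter] at hex
      simpa using hex
    · intro hih hhk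
      have hinter : Finset.Iic h ∩ {i, k} = {i} := by
        ext t
        simp only [Finset.mem_inter, Finset.mem_Iic, Finset.mem_insert,
          Finset.mem_singleton]
        constructor
        · rintro ⟨hth, rfl | rfl⟩
          · rfl
          · exact absurd hth (not_le.2 hhk)
        · rintro rfl; exact ⟨hih, Or.inl rfl⟩
      rw [hinter, Finset.sum_singleton, Finset.sum_singleton] at hex
      omega
    · intro hkh
      have hinter : Finset.Iic h ∩ {i, k} = {i, k} := by
        rw [Finset.inter_eq_right]
        intro t ht
        simp only [Finset.mem_insert, Finset.mem_singleton] at ht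
        rcases ht with rfl | rfl
        · exact Finset.mem_Iic.2 (le_trans hik.le hkh)
        · exact Finset.mem_Iic.2 hkh
      rw [hinter, Finset.sum_pair hik.ne, Finset.sum_pair hik.ne] at hex
      omega
  have hmaj' : MajorizedBy r (grUpd s i k) := by
    constructor
    · intro h
      have hmh := maj.1 h
      rcases lt_or_ge h i with h1 | h2
      · rw [(hkey h).1 h1]; exact hmh
      · rcases lt_or_ge h k with h3 | h4
        · have he := (hkey h).2.1 h2 h3
          have hd := hdom h h2 h3
          omega
        · rw [(hkey h).2.2 h4]; exact hmh
    · have hex := grSumExchange Finset.univ {i, k} (grUpd s i k) s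
        (fun t ht => by
          simp only [Finset.mem_insert, Finset.mem_singleton, not_or] at ht
          exact hs'other t ht.1 ht.2)
      rw [Finset.univ_inter, Finset.sum_pair hik.ne, Finset.sum_pair hik.ne] at hex
      have := maj.2
      omega
  refine ⟨i, k, hik.ne, hski, hmaj', ?_⟩
  apply Finset.sum_lt_sum
  · intro h _
    rcases lt_or_ge h i with h1 | h2
    · rw [(hkey h).1 h1]
    · rcases lt_or_ge h k with h3 | h4
      · have he := (hkey h).2.1 h2 h3
        omega
      · rw [(hkey h).2.2 h4]
  · refine ⟨i, Finset.mem_univ i, ?_⟩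
    have h1 := (hkey i).2.1 le_rfl hik
    have h2 := hdom i le_rfl hik
    omega

lemma grMove {m n : ℕ} (M : Matrix (Fin m) (Fin n) ℕ) (hM : ZeroOne M)
    (i k : Fin m) (hik : i ≠ k) (hlt : rowSum M k < rowSum M i) :
    ∃ M', ZeroOne M' ∧ colSum M' = colSum M ∧
      rowSum M' = grUpd (rowSum M) i k := by
  classical
  have hj : ∃ j, M i j = 1 ∧ M k j = 0 := by
    by_contra hcon
    push_neg at hcon
    have hle : rowSum M i ≤ rowSum M k := by
      apply Finset.sum_le_sum
      intro j _
      have h1 := hM i j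
      have h2 := hM k j
      by_cases h : M i j = 1
      · have := hcon j h; omega
      · omega
    omega
  obtain ⟨j, hij, hkj⟩ := hj
  set M' : Matrix (Fin m) (Fin n) ℕ :=
    fun a b => if a = i ∧ b = j then 0 else if a = k ∧ b = j then 1 else M a b with hM'def
  have hM'ij : M' i j = 0 := by simp [hM'def]
  have hM'kj : M' k j = 1 := by simp [hM'def, Ne.symm hik]
  have hM'row : ∀ a b, a ≠ i → a ≠ k → M' a b = M a b := by
    intro a b h1 h2; simp [hM'def, h1, h2]
  have hM'col : ∀ a b, b ≠ j → M' a b = M a b := by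
    intro a b h1; simp [hM'def, h1]
  refine ⟨M', ?_, ?_, ?_⟩
  · intro a b
    have := hM a b
    simp only [hM'def]
    split_ifs <;> omega
  · funext b
    by_cases hb : b = j
    · subst hb
      have hex := grSumExchange Finset.univ {i, k} (fun a => M' a b) (fun a => M a b)
        (fun t ht => by
          simp only [Finset.mem_insert, Finset.mem_singleton, not_or] at ht
          exact hM'row t b ht.1 ht.2)
      rw [Finset.univ_inter, Finset.sum_pair hik, Finset.sum_pair hik] at hex
      simp only [colSum]
      simp only [hM'ij, hM'kj, hij, hkj] at hex
      omega
    · simp only [colSum]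
      exact Finset.sum_congr rfl (fun a _ => hM'col a b hb)
  · funext a
    by_cases ha : a = i
    · subst ha
      have hex := grSumExchange Finset.univ {j} (fun b => M' a b) (fun b => M a b)
        (fun t ht => hM'col a t (by simpa using ht))
      rw [Finset.univ_inter, Finset.sum_singleton, Finset.sum_singleton] at hex
      have hval : grUpd (rowSum M) a k a = rowSum M a - 1 := by simp [grUpd]
      rw [hval]
      simp only [rowSum] at hex hlt ⊢
      rw [hM'ij, hij] at hex
      omega
    · by_cases ha' : a = k
      · subst ha'
        have hex := grSumExchange Finset.univ {j} (fun b => M' a b) (fun b => M a b)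
          (fun t ht => hM'col a t (by simpa using ht))
        rw [Finset.univ_inter, Finset.sum_singleton, Finset.sum_singleton] at hex
        have hval : grUpd (rowSum M) i a a = rowSum M a + 1 := by
          simp [grUpd, Ne.symm hik]
        rw [hval]
        simp only [rowSum] at hex ⊢
        rw [hM'kj, hkj] at hex
        omega
      · have hval : grUpd (rowSum M) i k a = rowSum M a := by simp [grUpd, ha, ha']
        rw [hval]
        simp only [rowSum]
        exact Finset.sum_congr rfl (fun b _ => hM'row a b ha ha')

lemma grBuild {m n : ℕ} (r : Fin m → ℕ) (c : Fin n → ℕ) (hr : Antitone r) :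
    ∀ (N : ℕ) (s : Fin m → ℕ), grMeas r s ≤ N → MajorizedBy r s →
      (∃ M : Matrix (Fin m) (Fin n) ℕ, ZeroOne M ∧ rowSum M = s ∧ colSum M = c) →
      ∃ M : Matrix (Fin m) (Fin n) ℕ, ZeroOne M ∧ rowSum M = r ∧ colSum M = c := by
  intro N
  induction N with
  | zero =>
    intro s hN maj hM
    rcases eq_or_ne r s with rfl | hne
    · exact hM
    · obtain ⟨i, k, hik, hski, hmaj', hmeas⟩ := grTransfer r s hr maj hne
      omega
  | succ N ih =>
    intro s hN maj hM
    rcases eq_or_ne r s with rfl | hne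
    · exact hM
    · obtain ⟨i, k, hik, hski, hmaj', hmeas⟩ := grTransfer r s hr maj hne
      obtain ⟨M, hzo, hrow, hcol⟩ := hM
      obtain ⟨M', hzo', hcol', hrow'⟩ := grMove M hzo i k hik (by rw [hrow]; exact hski)
      refine ih (grUpd s i k) (by omega) hmaj' ⟨M', hzo', ?_, by rw [hcol', hcol]⟩
      rw [hrow', hrow]

/-- Gale–Ryser: a monotone (0,1)-matrix with prescribed nonincreasing row sums r
and column sums c exists iff r is majorized by the conjugate of c. -/
theorem gale_ryser (m n : ℕ) (r : Fin m → ℕ) (c : Fin n → ℕ)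
    (hr : Antitone r) (hc : Antitone c) (hcm : ∀ j, c j ≤ m) :
    (∃ A : Matrix (Fin m) (Fin n) ℕ, ZeroOne A ∧ MonotoneMat A ∧
      rowSum A = r ∧ colSum A = c) ↔ MajorizedBy r (conjTuple m c) := by
  constructor
  · rintro ⟨A, hzo, -, hrow, hcol⟩
    have hcolsum : ∀ j, ∑ a, A a j = c j := fun j => by rw [← hcol]; rfl
    constructor
    · intro h
      have hlhs : ∑ t ∈ Finset.Iic h, r t = ∑ j, ∑ t ∈ Finset.Iic h, A t j := by
        rw [← hrow]
        simp only [rowSum]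
        exact Finset.sum_comm
      have hrhs : ∑ t ∈ Finset.Iic h, conjTuple m c t
          = ∑ j, ((Finset.Iic h).filter (fun t : Fin m => (t : ℕ) + 1 ≤ c j)).card := by
        simp only [conjTuple, Finset.card_filter]
        exact Finset.sum_comm
      rw [hlhs, hrhs]
      apply Finset.sum_le_sum
      intro j _
      by_cases hcase : (h : ℕ) + 1 ≤ c j
      · have hfull : (Finset.Iic h).filter (fun t : Fin m => (t : ℕ) + 1 ≤ c j) = Finset.Iic h := by
          apply Finset.filter_true_of_mem
          intro t ht
          have htv : (t : ℕ) ≤ (h : ℕ) := Fin.le_def.1 (Finset.mem_Iic.1 ht)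
          omega
        rw [hfull]
        calc ∑ t ∈ Finset.Iic h, A t j ≤ ∑ t ∈ Finset.Iic h, 1 :=
              Finset.sum_le_sum (fun t _ => hzo t j)
          _ = (Finset.Iic h).card := by simp
      · have hset : (Finset.Iic h).filter (fun t : Fin m => (t : ℕ) + 1 ≤ c j)
            = Finset.univ.filter (fun t : Fin m => (t : ℕ) + 1 ≤ c j) := by
          ext t
          simp only [Finset.mem_filter, Finset.mem_Iic, Finset.mem_univ, true_and]
          constructor
          · exact fun ht => ht.2
          · intro ht
            refine ⟨Fin.le_def.2 ?_, ht⟩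
            omega
        rw [hset, grCardFilter (hcm j)]
        calc ∑ t ∈ Finset.Iic h, A t j ≤ ∑ t, A t j :=
              Finset.sum_le_sum_of_subset (Finset.subset_univ _)
          _ = c j := hcolsum j
    · have h1 : ∑ t, r t = ∑ j, c j := by
        rw [← hrow]
        simp only [rowSum]
        refine Finset.sum_comm.trans ?_
        exact Finset.sum_congr rfl (fun j _ => hcolsum j)
      have h2 : ∑ t, conjTuple m c t = ∑ j, c j := by
        simp only [conjTuple, Finset.card_filter]
        rw [Finset.sum_comm]
        refine Finset.sum_congr rfl (fun j _ => ?_)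
        rw [← Finset.card_filter]
        exact grCardFilter (hcm j)
      rw [h1, h2]
  · intro maj
    set A0 : Matrix (Fin m) (Fin n) ℕ := fun i j => if (i : ℕ) + 1 ≤ c j then 1 else 0
      with hA0
    have hzo : ZeroOne A0 := by
      intro i j
      simp only [hA0]
      split_ifs <;> omega
    have hrow0 : rowSum A0 = conjTuple m c := by
      funext i
      simp only [rowSum, hA0, conjTuple, Finset.card_filter]
    have hcol0 : colSum A0 = c := by
      funext j
      simp only [colSum, hA0]
      rw [← Finset.card_filter]
      exact grCardFilter (hcm j)
    obtain ⟨M, hzoM, hrowM, hcolM⟩ := grBuild r c hr (grMeas r (conjTuple m c))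
      (conjTuple m c) le_rfl maj ⟨A0, hzo, hrow0, hcol0⟩
    exact ⟨M, hzoM, ⟨by rw [hrowM]; exact hr, by rw [hcolM]; exact hc⟩, hrowM, hcolM⟩
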